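/- Let A be a positive invertible operator on a complex Hilbert space and let ξ₀ be a unit vector with associated rank-one projection P = ξ₀ξ₀*. Then A ≥ P if and only if ⟨A⁻¹ξ₀, ξ₀⟩ ≤ 1. -/

import Mathlib

open scoped InnerProductSpace

theorem stmt3 (H : Type*) [NormedAddCommGroup H] [InnerProductSpace ℂ H] [CompleteSpace H]
    (A B : H →L[ℂ] H) (hA : A.IsPositive)
    (hAB : A.comp B = ContinuousLinearMap.id ℂ H)
    (hBA : B.comp A = ContinuousLinearMap.id ℂ H)
    (ξ₀ : H) (hξ₀ : ‖ξ₀‖ = 1) :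
    (A - (innerSL ℂ ξ₀).smulRight ξ₀).IsPositive ↔ (⟪B ξ₀, ξ₀⟫_ℂ).re ≤ 1 := by
  have hsymm : ∀ x y : H, ⟪A x, y⟫_ℂ = ⟪x, A y⟫_ℂ :=
    (hA.1)
  have hABx : ∀ x : H, A (B x) = x := fun x =>
    congrFun (congrArg DFunLike.coe hAB) x
  have hre : ∀ x : H, (0:ℝ) ≤ (⟪A x, x⟫_ℂ).re := fun x => hA.2 x
  have hre' : ∀ x : H, (0:ℝ) ≤ (⟪x, A x⟫_ℂ).re := by
    intro x
    have h := hre x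
    rwa [← Complex.conj_re, inner_conj_symm] at h
  -- Cauchy–Schwarz for the semi-inner product ⟨u, v⟩ := ⟪u, A v⟫
  have CS : ∀ u v : H, ‖⟪u, A v⟫_ℂ‖ * ‖⟪v, A u⟫_ℂ‖ ≤ (⟪u, A u⟫_ℂ).re * (⟪v, A v⟫_ℂ).re := by
    intro u v
    let c : PreInnerProductSpace.Core ℂ H :=
      { inner := fun u v => ⟪u, A v⟫_ℂ
        conj_inner_symm := fun x y => by
          rw [inner_conj_symm, hsymm]
        re_inner_nonneg := fun x => by simpa using hre' x
        add_left := fun x y z => by simp [inner_add_left]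
        smul_left := fun x y r => by simp [inner_smul_left]; ring }
    exact @InnerProductSpace.Core.inner_mul_inner_self_le ℂ H _ _ _ c u v
  have happ : ∀ x : H, ((A - (innerSL ℂ ξ₀).smulRight ξ₀) x) = A x - ⟪ξ₀, x⟫_ℂ • ξ₀ := by
    intro x; rfl
  have hPinner : ∀ x : H, ⟪(⟪ξ₀, x⟫_ℂ • ξ₀ : H), x⟫_ℂ = (‖⟪ξ₀, x⟫_ℂ‖^2 : ℂ) := by
    intro x
    rw [inner_smul_left]
    exact RCLike.conj_mul _
  constructor
  · intro hpos
    have h := hpos.2 (B ξ₀)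
    have h' : (0:ℝ) ≤ (⟪(A - (innerSL ℂ ξ₀).smulRight ξ₀) (B ξ₀), B ξ₀⟫_ℂ).re := h
    rw [happ, inner_sub_left, hPinner, hABx] at h'
    set c := ⟪ξ₀, B ξ₀⟫_ℂ with hc
    have h2 : (0:ℝ) ≤ c.re - ‖c‖^2 := by
      rw [Complex.sub_re, ← Complex.ofReal_pow, Complex.ofReal_re] at h'
      exact h'
    have h3 : |c.re| ≤ ‖c‖ := Complex.abs_re_le_norm c
    have h4 : (⟪B ξ₀, ξ₀⟫_ℂ).re = c.re := by
      rw [hc, ← Complex.conj_re, inner_conj_symm]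
    rw [h4]
    have h5 : |c.re| * |c.re| ≤ ‖c‖ * ‖c‖ :=
      mul_self_le_mul_self (abs_nonneg _) h3
    nlinarith [abs_nonneg c.re, neg_abs_le c.re, le_abs_self c.re]
  · intro hle
    constructor
    · 
      intro x y
      simp only [ContinuousLinearMap.coe_coe]
      rw [happ, happ, inner_sub_left, inner_sub_right, hsymm]
      congr 1
      rw [inner_smul_left, inner_smul_right, ← inner_conj_symm x ξ₀]
      ring
    · intro x
      have key : ‖⟪ξ₀, x⟫_ℂ‖ * ‖⟪ξ₀, x⟫_ℂ‖ ≤ (⟪A x, x⟫_ℂ).re := by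
        have h1 : ⟪B ξ₀, A x⟫_ℂ = ⟪ξ₀, x⟫_ℂ := by rw [← hsymm, hABx]
        have h3 := CS (B ξ₀) x
        rw [h1, hABx] at h3
        rw [norm_inner_symm x ξ₀] at h3
        have h5 := hre' x
        have h6 : (⟪B ξ₀, ξ₀⟫_ℂ).re * (⟪x, A x⟫_ℂ).re ≤ (⟪x, A x⟫_ℂ).re := by
          nlinarith
        have h7 : (⟪x, A x⟫_ℂ).re = (⟪A x, x⟫_ℂ).re := by
          rw [← Complex.conj_re, inner_conj_symm]
        calc ‖⟪ξ₀, x⟫_ℂ‖ * ‖⟪ξ₀, x⟫_ℂ‖ ≤ (⟪B ξ₀, ξ₀⟫_ℂ).re * (⟪x, A x⟫_ℂ).re := h3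
          _ ≤ (⟪x, A x⟫_ℂ).re := h6
          _ = (⟪A x, x⟫_ℂ).re := h7
      show (0:ℝ) ≤ (⟪(A - (innerSL ℂ ξ₀).smulRight ξ₀) x, x⟫_ℂ).re
      rw [happ, inner_sub_left, hPinner]
      rw [Complex.sub_re, ← Complex.ofReal_pow, Complex.ofReal_re]
      rw [sq]
      linarith [key]
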